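/- Under the hypotheses of the main construction, for k > 0 and m+1-k < u ≤ m, the ideal I₁^{k-1}(I₁+⋯+I_{u-1}) contains the power of the maximal ideal m^{(k-1)d₁ + d_u}, where m = (x,y), d₁ = (m+2)p₁, and d_u = deg(I_u). -/

import Mathlib

open MvPolynomial

/-- The initial degree of a graded ideal: the smallest degree of a nonzero
homogeneous element of `I`. -/
noncomputable def idealDeg {K : Type*} [Field K] (I : Ideal (MvPolynomial (Fin 2) K)) : ℕ :=
  sInf {d | ∃ f ∈ I, f ≠ 0 ∧ f.IsHomogeneous d}

section auxgen

variable {R : Type*} [CommRing R]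

lemma mem_span_pair_pow (x y : R) {a b n : ℕ} (h : a + b = n) :
    x ^ a * y ^ b ∈ Ideal.span {x, y} ^ n := by
  subst h
  rw [pow_add]
  exact Ideal.mul_mem_mul
    (Ideal.pow_mem_pow (Ideal.subset_span (by simp)) a)
    (Ideal.pow_mem_pow (Ideal.subset_span (by simp)) b)

lemma span_pair_pow_le (x y : R) (n : ℕ) (J : Ideal R)
    (h : ∀ a b, a + b = n → x ^ a * y ^ b ∈ J) :
    Ideal.span {x, y} ^ n ≤ J := by
  induction n generalizing J with
  | zero =>
      have h1 : (1 : R) ∈ J := by simpa using h 0 0 rfl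
      rw [pow_zero, Ideal.one_eq_top]
      intro z _
      simpa using J.mul_mem_left z h1
  | succ n ih =>
      have key : Ideal.span {x, y} ^ n ≤ Submodule.colon J (Ideal.span {x, y}) := by
        apply ih
        intro a b hab
        rw [Submodule.mem_colon]
        intro q hq
        obtain ⟨c, d, rfl⟩ := Ideal.mem_span_pair.mp hq
        have h1 := h (a + 1) b (by omega)
        have h2 := h a (b + 1) (by omega)
        have heq : (x ^ a * y ^ b) • (c * x + d * y)
            = c * (x ^ (a + 1) * y ^ b) + d * (x ^ a * y ^ (b + 1)) := by
          rw [smul_eq_mul]; ring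
        rw [heq]
        exact J.add_mem (J.mul_mem_left _ h1) (J.mul_mem_left _ h2)
      rw [pow_succ]
      refine Ideal.mul_le.mpr fun r hr s hs => ?_
      have h3 := key hr
      rw [Submodule.mem_colon] at h3
      simpa [smul_eq_mul] using h3 s hs

lemma mono_mul_mem {J : Ideal R} (x y : R) {a b c d : ℕ}
    (hac : a ≤ c) (hbd : b ≤ d) (h : x ^ a * y ^ b ∈ J) : x ^ c * y ^ d ∈ J := by
  obtain ⟨e, rfl⟩ := Nat.exists_eq_add_of_le hac
  obtain ⟨f, rfl⟩ := Nat.exists_eq_add_of_le hbd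
  have heq : x ^ (a + e) * y ^ (b + f) = (x ^ e * y ^ f) * (x ^ a * y ^ b) := by ring
  rw [heq]
  exact Ideal.mul_mem_left _ _ h

lemma mem_sq_pow (x y : R) (P Q n e1 e2 f1 f2 : ℕ) (he : e1 + e2 = n) (hf : f1 + f2 = n) :
    x ^ (e1 * P + f1 * Q) * y ^ (e2 * P + f2 * Q)
      ∈ (Ideal.span {x ^ P, y ^ P} * Ideal.span {x ^ Q, y ^ Q}) ^ n := by
  rw [mul_pow]
  have h1 : (x ^ P) ^ e1 * (y ^ P) ^ e2 ∈ Ideal.span {x ^ P, y ^ P} ^ n :=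
    mem_span_pair_pow _ _ he
  have h2 : (x ^ Q) ^ f1 * (y ^ Q) ^ f2 ∈ Ideal.span {x ^ Q, y ^ Q} ^ n :=
    mem_span_pair_pow _ _ hf
  have h3 := Ideal.mul_mem_mul h1 h2
  have heq : x ^ (e1 * P + f1 * Q) * y ^ (e2 * P + f2 * Q)
      = ((x ^ P) ^ e1 * (y ^ P) ^ e2) * ((x ^ Q) ^ f1 * (y ^ Q) ^ f2) := by ring
  rw [heq]; exact h3

lemma le_sum_ideals {s : Finset ℕ} {I : ℕ → Ideal R} {j : ℕ} (hj : j ∈ s) :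
    I j ≤ ∑ i ∈ s, I i :=
  Finset.single_le_sum (fun _ _ => zero_le) hj


lemma mul_mono_mem {J1 J2 : Ideal R} (x y : R) {a1 b1 a2 b2 : ℕ}
    (h1 : x ^ a1 * y ^ b1 ∈ J1) (h2 : x ^ a2 * y ^ b2 ∈ J2) :
    x ^ (a1 + a2) * y ^ (b1 + b2) ∈ J1 * J2 := by
  have heq : x ^ (a1 + a2) * y ^ (b1 + b2) = (x ^ a1 * y ^ b1) * (x ^ a2 * y ^ b2) := by ring
  rw [heq]; exact Ideal.mul_mem_mul h1 h2

end auxgen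

section lowdeg

variable (R : Type*) [CommRing R]

def lowDegIdeal (D : ℕ) : Ideal (MvPolynomial (Fin 2) R) where
  carrier := {f | ∀ d : Fin 2 →₀ ℕ, d 0 + d 1 < D → coeff d f = 0}
  add_mem' := by
    intro f g hf hg d hd
    rw [coeff_add, hf d hd, hg d hd, add_zero]
  zero_mem' := by intro d _; simp
  smul_mem' := by
    intro c f hf d hd
    rw [smul_eq_mul, coeff_mul]
    apply Finset.sum_eq_zero
    rintro ⟨d1, d2⟩ hmem
    have hsum : d1 + d2 = d := Finset.HasAntidiagonal.mem_antidiagonal.mp hmem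
    have h2 : d2 0 + d2 1 < D := by
      have h0 : d1 0 + d2 0 = d 0 := by rw [← hsum]; simp
      have h1 : d1 1 + d2 1 = d 1 := by rw [← hsum]; simp
      omega
    rw [hf d2 h2, mul_zero]

lemma mem_lowDegIdeal {D : ℕ} {f : MvPolynomial (Fin 2) R} :
    f ∈ lowDegIdeal R D ↔ ∀ d : Fin 2 →₀ ℕ, d 0 + d 1 < D → coeff d f = 0 := Iff.rfl

lemma spanXY_le_lowDeg1 : Ideal.span {(X 0 : MvPolynomial (Fin 2) R), X 1} ≤ lowDegIdeal R 1 := by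
  rw [Ideal.span_le]
  rintro z (rfl | rfl) <;>
  · rw [SetLike.mem_coe, mem_lowDegIdeal]
    intro d hd
    have hd0 : d = 0 := by
      ext i; fin_cases i <;> simp <;> omega
    subst hd0
    simp [coeff_X']

lemma mul_lowDeg (D1 D2 : ℕ) : lowDegIdeal R D1 * lowDegIdeal R D2 ≤ lowDegIdeal R (D1 + D2) := by
  refine Ideal.mul_le.mpr fun f hf g hg => ?_
  rw [mem_lowDegIdeal] at *
  intro d hd
  rw [coeff_mul]
  apply Finset.sum_eq_zero
  rintro ⟨d1, d2⟩ hmem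
  have hsum : d1 + d2 = d := Finset.HasAntidiagonal.mem_antidiagonal.mp hmem
  have h0 : d1 0 + d2 0 = d 0 := by rw [← hsum]; simp
  have h1 : d1 1 + d2 1 = d 1 := by rw [← hsum]; simp
  rcases lt_or_ge (d1 0 + d1 1) D1 with h | h
  · rw [hf d1 h, zero_mul]
  · rw [hg d2 (by omega), mul_zero]

lemma spanXY_pow_le_lowDeg (D : ℕ) :
    Ideal.span {(X 0 : MvPolynomial (Fin 2) R), X 1} ^ D ≤ lowDegIdeal R D := by
  induction D with
  | zero =>
      intro f _
      rw [mem_lowDegIdeal]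
      intro d hd; omega
  | succ n ih =>
      rw [pow_succ]
      exact le_trans (Ideal.mul_mono ih (spanXY_le_lowDeg1 R)) (mul_lowDeg R n 1)

lemma isHomog_monomial (a b : ℕ) :
    ((X 0 : MvPolynomial (Fin 2) R) ^ a * X 1 ^ b).IsHomogeneous (a + b) := by
  have h1 : ((X 0 : MvPolynomial (Fin 2) R) ^ a).IsHomogeneous a := by
    simpa using (isHomogeneous_X R (0 : Fin 2)).pow a
  have h2 : ((X 1 : MvPolynomial (Fin 2) R) ^ b).IsHomogeneous b := by
    simpa using (isHomogeneous_X R (1 : Fin 2)).pow b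
  exact h1.mul h2

lemma isHomog_degree {f : MvPolynomial (Fin 2) R} {n : ℕ} (hf : f.IsHomogeneous n)
    {d : Fin 2 →₀ ℕ} (hd : coeff d f ≠ 0) : d 0 + d 1 = n := by
  have h := hf hd
  simp [Finsupp.weight_apply, Finsupp.sum_fintype, Fin.sum_univ_two] at h
  exact h

end lowdeg
theorem stmt13 (K : Type*) [Field K] (m : ℕ) (hm : 2 ≤ m) (p a : ℕ → ℕ)
    (hp1 : 2 ≤ p 1) (hp : ∀ i, 2 ≤ i → i ≤ m → 2 ≤ p i)
    (ha : ∀ i, 2 ≤ i → i ≤ m → 2 ≤ a i)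
    (hpa : ∀ i, 2 ≤ i → i ≤ m → p 1 = (a i + 1) * p i)
    (hsum : ∑ j ∈ Finset.Icc 2 (m - 1), p j < p 1)
    (I : ℕ → Ideal (MvPolynomial (Fin 2) K))
    (hI1 : I 1 = Ideal.span {X 0 ^ p 1, X 1 ^ p 1} *
        Ideal.span {X 0 ^ ((m + 1) * p 1), X 1 ^ ((m + 1) * p 1)})
    (hIi : ∀ i, 2 ≤ i → i ≤ m → I i =
        Ideal.span {X 0 ^ (i * p 1 + p i) *
            X 1 ^ ((m + 2 - i) * p 1 + ∑ j ∈ Finset.Icc 2 i, p j)} *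
          Ideal.span {X 0 ^ p i, X 1 ^ p i} ^ (a i - 1)) :
    ∀ k, 0 < k → ∀ u, 2 ≤ u → u ≤ m → m + 1 - k < u →
      Ideal.span {(X 0 : MvPolynomial (Fin 2) K), X 1} ^
          ((k - 1) * ((m + 2) * p 1) + idealDeg (I u)) ≤
        I 1 ^ (k - 1) * ∑ i ∈ Finset.Icc 1 (u - 1), I i := by
  intro k hk u hu2 hum hmuk
  obtain ⟨kp, rfl⟩ : ∃ kp, k = kp + 1 := ⟨k - 1, by omega⟩
  simp only [Nat.add_sub_cancel]
  have hkm : m + 1 ≤ u + kp := by omega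
  -- membership helper for the ideals I j, 2 ≤ j ≤ m
  have memIj : ∀ j s t, 2 ≤ j → j ≤ m → s + t = a j - 1 →
      (X 0 : MvPolynomial (Fin 2) K) ^ (j * p 1 + p j + p j * s)
        * X 1 ^ ((m + 2 - j) * p 1 + (∑ l ∈ Finset.Icc 2 j, p l) + p j * t) ∈ I j := by
    intro j s t h2j hjm hst
    rw [hIi j h2j hjm]
    have h2 : ((X 0 : MvPolynomial (Fin 2) K) ^ p j) ^ s * (X 1 ^ p j) ^ t
        ∈ Ideal.span {(X 0 : MvPolynomial (Fin 2) K) ^ p j, X 1 ^ p j} ^ (a j - 1) :=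
      mem_span_pair_pow _ _ hst
    have h3 := Ideal.mul_mem_mul (Ideal.subset_span (Set.mem_singleton
      ((X 0 : MvPolynomial (Fin 2) K) ^ (j * p 1 + p j)
        * X 1 ^ ((m + 2 - j) * p 1 + ∑ l ∈ Finset.Icc 2 j, p l)))) h2
    have heq : (X 0 : MvPolynomial (Fin 2) K) ^ (j * p 1 + p j + p j * s)
        * X 1 ^ ((m + 2 - j) * p 1 + (∑ l ∈ Finset.Icc 2 j, p l) + p j * t)
        = ((X 0 : MvPolynomial (Fin 2) K) ^ (j * p 1 + p j)
            * X 1 ^ ((m + 2 - j) * p 1 + ∑ l ∈ Finset.Icc 2 j, p l))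
          * (((X 0 : MvPolynomial (Fin 2) K) ^ p j) ^ s * (X 1 ^ p j) ^ t) := by ring
    rw [heq]; exact h3
  -- the degree bound for I u
  have hpau : p 1 = (a u + 1) * p u := hpa u hu2 hum
  have hau : 2 ≤ a u := ha u hu2 hum
  have hSu : ∑ l ∈ Finset.Icc 2 u, p l = (∑ l ∈ Finset.Icc 2 (u - 1), p l) + p u := by
    have h := Finset.sum_Icc_succ_top (show 2 ≤ (u - 1) + 1 by omega) p
    rw [show u - 1 + 1 = u by omega] at h
    exact h
  have hIu_le : I u ≤ Ideal.span {(X 0 : MvPolynomial (Fin 2) K), X 1}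
      ^ ((m + 3) * p 1 + ∑ l ∈ Finset.Icc 2 (u - 1), p l) := by
    rw [hIi u hu2 hum]
    have h1 : Ideal.span {(X 0 : MvPolynomial (Fin 2) K) ^ (u * p 1 + p u)
          * X 1 ^ ((m + 2 - u) * p 1 + ∑ l ∈ Finset.Icc 2 u, p l)}
        ≤ Ideal.span {(X 0 : MvPolynomial (Fin 2) K), X 1}
          ^ ((u * p 1 + p u) + ((m + 2 - u) * p 1 + ∑ l ∈ Finset.Icc 2 u, p l)) := by
      rw [Ideal.span_le]
      rintro z rfl
      exact mem_span_pair_pow _ _ rfl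
    have h2 : Ideal.span {(X 0 : MvPolynomial (Fin 2) K) ^ p u, X 1 ^ p u}
        ≤ Ideal.span {(X 0 : MvPolynomial (Fin 2) K), X 1} ^ p u := by
      rw [Ideal.span_le]
      rintro z (rfl | rfl)
      · have h := mem_span_pair_pow (X 0 : MvPolynomial (Fin 2) K) (X 1)
          (a := p u) (b := 0) (n := p u) (by omega)
        simpa using h
      · have h := mem_span_pair_pow (X 0 : MvPolynomial (Fin 2) K) (X 1)
          (a := 0) (b := p u) (n := p u) (by omega)
        simpa using h
    refine le_trans (Ideal.mul_mono h1 (Ideal.pow_right_mono h2 _)) ?_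
    rw [← pow_mul, ← pow_add]
    apply Ideal.pow_le_pow_right
    obtain ⟨c, hc⟩ : ∃ c, a u = c + 2 := ⟨a u - 2, by omega⟩
    have hexp : ((u * p 1 + p u) + ((m + 2 - u) * p 1 + ∑ l ∈ Finset.Icc 2 u, p l))
        + p u * (a u - 1)
        = (m + 3) * p 1 + ∑ l ∈ Finset.Icc 2 (u - 1), p l := by
      rw [hSu, hc, show c + 2 - 1 = c + 1 from rfl]
      have hpz : (p 1 : ℤ) = ((c : ℤ) + 2 + 1) * p u := by
        rw [hc] at hpau; exact_mod_cast hpau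
      zify [show u ≤ m + 2 by omega]
      linear_combination -hpz
    exact hexp.ge
  have hmemS : idealDeg (I u) ∈ {d | ∃ f ∈ I u, f ≠ 0 ∧ f.IsHomogeneous d} := by
    apply Nat.sInf_mem
    refine ⟨(u * p 1 + p u + p u * (a u - 1))
        + ((m + 2 - u) * p 1 + (∑ l ∈ Finset.Icc 2 u, p l) + p u * 0),
      (X 0 : MvPolynomial (Fin 2) K) ^ (u * p 1 + p u + p u * (a u - 1))
        * X 1 ^ ((m + 2 - u) * p 1 + (∑ l ∈ Finset.Icc 2 u, p l) + p u * 0),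
      memIj u (a u - 1) 0 hu2 hum (by omega), ?_, isHomog_monomial K _ _⟩
    exact mul_ne_zero (pow_ne_zero _ (X_ne_zero _)) (pow_ne_zero _ (X_ne_zero _))
  have hIdeg : (m + 3) * p 1 + (∑ l ∈ Finset.Icc 2 (u - 1), p l) ≤ idealDeg (I u) := by
    obtain ⟨f, hfI, hf0, hfhom⟩ := hmemS
    have hfd := (hIu_le.trans (spanXY_pow_le_lowDeg K _)) hfI
    obtain ⟨d, hd⟩ := MvPolynomial.ne_zero_iff.mp hf0
    have h1 : ¬ (d 0 + d 1 < (m + 3) * p 1 + ∑ l ∈ Finset.Icc 2 (u - 1), p l) :=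
      fun hlt => hd (hfd d hlt)
    have h2 := isHomog_degree K hfhom hd
    omega
  refine le_trans (Ideal.pow_le_pow_right (Nat.add_le_add_left hIdeg _)) ?_
  apply span_pair_pow_le
  intro α β hab
  obtain ⟨F, E, r, hE, hr, rfl⟩ :
      ∃ F E r, E ≤ m ∧ r < p 1 ∧ α = p 1 * ((m + 1) * F + E) + r := by
    refine ⟨(α / p 1) / (m + 1), (α / p 1) % (m + 1), α % p 1, ?_, ?_, ?_⟩
    · exact Nat.le_of_lt_succ (Nat.mod_lt _ (by omega))
    · exact Nat.mod_lt _ (by omega)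
    · rw [Nat.div_add_mod (α / p 1) (m + 1), Nat.div_add_mod α (p 1)]
  have h1T : I 1 ≤ ∑ i ∈ Finset.Icc 1 (u - 1), I i :=
    le_sum_ideals (Finset.mem_Icc.mpr (by omega))
  have hpath1 : I 1 ^ (kp + 1) ≤ I 1 ^ kp * ∑ i ∈ Finset.Icc 1 (u - 1), I i := by
    rw [pow_succ]; exact Ideal.mul_mono_right h1T
  rcases le_or_gt F kp with hFK | hFK
  · -- F ≤ kp
    obtain ⟨f2, hf2⟩ := Nat.exists_eq_add_of_le hFK
    have hf2z : (kp : ℤ) = F + f2 := by exact_mod_cast hf2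
    rcases le_or_gt E (kp + 1) with hEK | hEK
    · -- CASE A : use I 1 ^ (kp+1)
      obtain ⟨e2, he2⟩ := Nat.exists_eq_add_of_le hEK
      obtain ⟨ρ, hρ⟩ := Nat.exists_eq_add_of_lt hr
      have hW : (X 0 : MvPolynomial (Fin 2) K) ^ (E * p 1 + F * ((m + 1) * p 1))
          * X 1 ^ (e2 * p 1 + (f2 + 1) * ((m + 1) * p 1)) ∈ I 1 ^ (kp + 1) := by
        rw [hI1]
        exact mem_sq_pow _ _ (p 1) ((m + 1) * p 1) (kp + 1) E e2 F (f2 + 1)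
          (by omega) (by omega)
      refine mono_mul_mem (X 0) (X 1) ?_ ?_ (hpath1 hW)
      · exact Nat.le.intro (show E * p 1 + F * ((m + 1) * p 1) + r
          = p 1 * ((m + 1) * F + E) + r by ring)
      · have eq2 : (p 1 * ((m + 1) * F + E) + r)
            + (e2 * p 1 + (f2 + 1) * ((m + 1) * p 1))
            + ((ρ + 1) + ∑ l ∈ Finset.Icc 2 (u - 1), p l)
            = kp * ((m + 2) * p 1) + ((m + 3) * p 1 + ∑ l ∈ Finset.Icc 2 (u - 1), p l) := by
          have he2z : ((kp : ℤ) + 1) = E + e2 := by exact_mod_cast he2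
          have hρz : (p 1 : ℤ) = r + ρ + 1 := by exact_mod_cast hρ
          zify
          linear_combination (-((m : ℤ) + 1) * (p 1)) * hf2z - (p 1 : ℤ) * he2z - hρz
        have h4 : (p 1 * ((m + 1) * F + E) + r)
            + (e2 * p 1 + (f2 + 1) * ((m + 1) * p 1))
            ≤ (p 1 * ((m + 1) * F + E) + r) + β := by
          rw [hab]; exact Nat.le.intro eq2
        exact Nat.le_of_add_le_add_left h4
    · -- CASE D : E ≥ kp + 2
      obtain ⟨G, rfl⟩ : ∃ G, E = kp + 2 + G := ⟨E - (kp + 2), by omega⟩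
      have hK1 : 1 ≤ kp := by omega
      have hGu : G + 3 ≤ u := by omega
      have hW1 : (X 0 : MvPolynomial (Fin 2) K) ^ (kp * p 1 + F * ((m + 1) * p 1))
          * X 1 ^ (0 * p 1 + f2 * ((m + 1) * p 1)) ∈ I 1 ^ kp := by
        rw [hI1]
        exact mem_sq_pow _ _ (p 1) ((m + 1) * p 1) kp kp 0 F f2 (by omega) (by omega)
      rcases le_or_gt (p (G + 2)) r with hpr | hpr
      · -- D1 : use I 1 ^ kp * I (G+2)
        have hppos : 0 < p (G + 2) := by
          have := hp (G + 2) (by omega) (by omega); omega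
        have hpaj := hpa (G + 2) (by omega) (by omega)
        have haj := ha (G + 2) (by omega) (by omega)
        have hw1 : 1 ≤ r / p (G + 2) := (Nat.one_le_div_iff hppos).mpr hpr
        have hwa : r / p (G + 2) ≤ a (G + 2) := by
          have hrlt : r < (a (G + 2) + 1) * p (G + 2) := by rw [← hpaj]; exact hr
          have := (Nat.div_lt_iff_lt_mul hppos).mpr hrlt
          omega
        obtain ⟨s, hs⟩ : ∃ s, r / p (G + 2) = s + 1 := ⟨r / p (G + 2) - 1, by omega⟩
        obtain ⟨t, ht⟩ : ∃ t, a (G + 2) = s + 1 + t := ⟨a (G + 2) - (s + 1), by omega⟩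
        obtain ⟨ρ, hρ2, hρ'⟩ : ∃ ρ, ρ < p (G + 2) ∧ r = (s + 1) * p (G + 2) + ρ := by
          refine ⟨r % p (G + 2), Nat.mod_lt _ hppos, ?_⟩
          conv_lhs => rw [← Nat.div_add_mod r (p (G + 2))]
          rw [hs]; ring
        obtain ⟨χ, hχ⟩ := Nat.exists_eq_add_of_lt hρ2
        have hSle : (∑ l ∈ Finset.Icc 2 (G + 2), p l) ≤ ∑ l ∈ Finset.Icc 2 (u - 1), p l :=
          Finset.sum_le_sum_of_subset (Finset.Icc_subset_Icc_right (by omega))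
        obtain ⟨δ, hδ⟩ := Nat.exists_eq_add_of_le hSle
        have hpa2 : p 1 = (s + 1 + t + 1) * p (G + 2) := by rw [ht] at hpaj; exact hpaj
        have hW2 := memIj (G + 2) s t (by omega) (by omega) (by omega)
        have hjT : I 1 ^ kp * I (G + 2)
            ≤ I 1 ^ kp * ∑ i ∈ Finset.Icc 1 (u - 1), I i :=
          Ideal.mul_mono_right (le_sum_ideals (Finset.mem_Icc.mpr (by omega)))
        have hρ'z : (r : ℤ) = ((s : ℤ) + 1) * p (G + 2) + ρ := by exact_mod_cast hρ'
        refine mono_mul_mem (X 0) (X 1) ?_ ?_ (hjT (mul_mono_mem _ _ hW1 hW2))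
        · have eq1 : (kp * p 1 + F * ((m + 1) * p 1))
              + ((G + 2) * p 1 + p (G + 2) + p (G + 2) * s) + ρ
              = p 1 * ((m + 1) * F + (kp + 2 + G)) + r := by
            zify
            linear_combination -hρ'z
          exact Nat.le.intro eq1
        · have eq2 : (p 1 * ((m + 1) * F + (kp + 2 + G)) + r)
              + ((0 * p 1 + f2 * ((m + 1) * p 1))
                + ((m + 2 - (G + 2)) * p 1 + (∑ l ∈ Finset.Icc 2 (G + 2), p l) + p (G + 2) * t))
              + (δ + (χ + 1))
              = kp * ((m + 2) * p 1) + ((m + 3) * p 1 + ∑ l ∈ Finset.Icc 2 (u - 1), p l) := by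
            have hχz : (p (G + 2) : ℤ) = ρ + χ + 1 := by exact_mod_cast hχ
            have hδz : (∑ l ∈ Finset.Icc 2 (u - 1), (p l : ℤ))
                = (∑ l ∈ Finset.Icc 2 (G + 2), (p l : ℤ)) + δ := by exact_mod_cast hδ
            have hpa2z : (p 1 : ℤ) = ((s : ℤ) + 1 + t + 1) * p (G + 2) := by
              exact_mod_cast hpa2
            zify [show G + 2 ≤ m + 2 by omega]
            linear_combination (-((m : ℤ) + 1) * (p 1)) * hf2z + hρ'z - hχz - hδz - hpa2z
          have h4 : (p 1 * ((m + 1) * F + (kp + 2 + G)) + r)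
              + ((0 * p 1 + f2 * ((m + 1) * p 1))
                + ((m + 2 - (G + 2)) * p 1 + (∑ l ∈ Finset.Icc 2 (G + 2), p l) + p (G + 2) * t))
              ≤ (p 1 * ((m + 1) * F + (kp + 2 + G)) + r) + β := by
            rw [hab]; exact Nat.le.intro eq2
          exact Nat.le_of_add_le_add_left h4
      · -- r < p (G+2)
        rcases le_or_gt 1 G with hG1 | hG0
        · -- D2a : use I 1 ^ kp * I (G+1)
          have hpaj1 := hpa (G + 1) (by omega) (by omega)
          have haj1 := ha (G + 1) (by omega) (by omega)
          obtain ⟨s, hs⟩ : ∃ s, a (G + 1) = s + 1 := ⟨a (G + 1) - 1, by omega⟩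
          have hpa2 : p 1 = (s + 1 + 1) * p (G + 1) := by rw [hs] at hpaj1; exact hpaj1
          have hstep : (∑ l ∈ Finset.Icc 2 (G + 2), p l)
              = (∑ l ∈ Finset.Icc 2 (G + 1), p l) + p (G + 2) :=
            Finset.sum_Icc_succ_top (by omega) p
          have hSle : (∑ l ∈ Finset.Icc 2 (G + 2), p l) ≤ ∑ l ∈ Finset.Icc 2 (u - 1), p l :=
            Finset.sum_le_sum_of_subset (Finset.Icc_subset_Icc_right (by omega))
          obtain ⟨δ, hδ⟩ := Nat.exists_eq_add_of_le hSle
          obtain ⟨ε, hε⟩ := Nat.exists_eq_add_of_lt hpr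
          have hW2 := memIj (G + 1) s 0 (by omega) (by omega) (by omega)
          have hjT : I 1 ^ kp * I (G + 1)
              ≤ I 1 ^ kp * ∑ i ∈ Finset.Icc 1 (u - 1), I i :=
            Ideal.mul_mono_right (le_sum_ideals (Finset.mem_Icc.mpr (by omega)))
          have hpa2z : (p 1 : ℤ) = ((s : ℤ) + 1 + 1) * p (G + 1) := by exact_mod_cast hpa2
          refine mono_mul_mem (X 0) (X 1) ?_ ?_ (hjT (mul_mono_mem _ _ hW1 hW2))
          · have eq1 : (kp * p 1 + F * ((m + 1) * p 1))
                + ((G + 1) * p 1 + p (G + 1) + p (G + 1) * s) + (r + p (G + 1))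
                = p 1 * ((m + 1) * F + (kp + 2 + G)) + r := by
              zify
              linear_combination -hpa2z
            exact Nat.le.intro eq1
          · have eq2 : (p 1 * ((m + 1) * F + (kp + 2 + G)) + r)
                + ((0 * p 1 + f2 * ((m + 1) * p 1))
                  + ((m + 2 - (G + 1)) * p 1 + (∑ l ∈ Finset.Icc 2 (G + 1), p l) + p (G + 1) * 0))
                + ((ε + 1) + δ)
                = kp * ((m + 2) * p 1) + ((m + 3) * p 1 + ∑ l ∈ Finset.Icc 2 (u - 1), p l) := by
              have hεz : (p (G + 2) : ℤ) = r + ε + 1 := by exact_mod_cast hε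
              have hstepz : (∑ l ∈ Finset.Icc 2 (G + 2), (p l : ℤ))
                  = (∑ l ∈ Finset.Icc 2 (G + 1), (p l : ℤ)) + p (G + 2) := by
                exact_mod_cast hstep
              have hδz : (∑ l ∈ Finset.Icc 2 (u - 1), (p l : ℤ))
                  = (∑ l ∈ Finset.Icc 2 (G + 2), (p l : ℤ)) + δ := by exact_mod_cast hδ
              zify [show G + 1 ≤ m + 2 by omega]
              linear_combination (-((m : ℤ) + 1) * (p 1)) * hf2z - hεz - hstepz - hδz
            have h4 : (p 1 * ((m + 1) * F + (kp + 2 + G)) + r)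
                + ((0 * p 1 + f2 * ((m + 1) * p 1))
                  + ((m + 2 - (G + 1)) * p 1 + (∑ l ∈ Finset.Icc 2 (G + 1), p l) + p (G + 1) * 0))
                ≤ (p 1 * ((m + 1) * F + (kp + 2 + G)) + r) + β := by
              rw [hab]; exact Nat.le.intro eq2
            exact Nat.le_of_add_le_add_left h4
        · -- D2b : G = 0, use I 1 ^ (kp+1)
          have hG0' : G = 0 := by omega
          subst hG0'
          have hrp2 : r < p 2 := by simpa using hpr
          have hp2σ : p 2 ≤ ∑ l ∈ Finset.Icc 2 (u - 1), p l := by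
            have hsub : Finset.Icc 2 2 ⊆ Finset.Icc 2 (u - 1) :=
              Finset.Icc_subset_Icc_right (by omega)
            have h := Finset.sum_le_sum_of_subset (f := p) hsub
            simpa using h
          obtain ⟨δ, hδ⟩ : ∃ δ, (∑ l ∈ Finset.Icc 2 (u - 1), p l) = r + δ :=
            Nat.exists_eq_add_of_le (by omega)
          have hW : (X 0 : MvPolynomial (Fin 2) K) ^ ((kp + 1) * p 1 + F * ((m + 1) * p 1))
              * X 1 ^ (0 * p 1 + (f2 + 1) * ((m + 1) * p 1)) ∈ I 1 ^ (kp + 1) := by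
            rw [hI1]
            exact mem_sq_pow _ _ (p 1) ((m + 1) * p 1) (kp + 1) (kp + 1) 0 F (f2 + 1)
              (by omega) (by omega)
          refine mono_mul_mem (X 0) (X 1) ?_ ?_ (hpath1 hW)
          · exact Nat.le.intro (show (kp + 1) * p 1 + F * ((m + 1) * p 1) + (p 1 + r)
              = p 1 * ((m + 1) * F + (kp + 2 + 0)) + r by ring)
          · have eq2 : (p 1 * ((m + 1) * F + (kp + 2 + 0)) + r)
                + (0 * p 1 + (f2 + 1) * ((m + 1) * p 1)) + δ
                = kp * ((m + 2) * p 1) + ((m + 3) * p 1 + ∑ l ∈ Finset.Icc 2 (u - 1), p l) := by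
              have hδz : (∑ l ∈ Finset.Icc 2 (u - 1), (p l : ℤ)) = r + δ := by
                exact_mod_cast hδ
              zify
              linear_combination (-((m : ℤ) + 1) * (p 1)) * hf2z - hδz
            have h4 : (p 1 * ((m + 1) * F + (kp + 2 + 0)) + r)
                + (0 * p 1 + (f2 + 1) * ((m + 1) * p 1))
                ≤ (p 1 * ((m + 1) * F + (kp + 2 + 0)) + r) + β := by
              rw [hab]; exact Nat.le.intro eq2
            exact Nat.le_of_add_le_add_left h4
  · -- F ≥ kp + 1
    obtain ⟨w, rfl⟩ : ∃ w, F = kp + 1 + w := ⟨F - (kp + 1), by omega⟩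
    rcases le_or_gt ((m + 1) * w + E) kp with hcK | hcK
    · -- CASE B : use I 1 ^ (kp+1)
      obtain ⟨e2, rfl⟩ := Nat.exists_eq_add_of_le hcK
      obtain ⟨ρ, hρ⟩ := Nat.exists_eq_add_of_lt hr
      have hW : (X 0 : MvPolynomial (Fin 2) K)
            ^ (((m + 1) * w + E) * p 1 + ((m + 1) * w + E + e2 + 1) * ((m + 1) * p 1))
          * X 1 ^ ((e2 + 1) * p 1 + 0 * ((m + 1) * p 1))
          ∈ I 1 ^ ((m + 1) * w + E + e2 + 1) := by
        rw [hI1]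
        exact mem_sq_pow _ _ (p 1) ((m + 1) * p 1) ((m + 1) * w + E + e2 + 1)
          ((m + 1) * w + E) (e2 + 1) ((m + 1) * w + E + e2 + 1) 0 (by ring) (by ring)
      refine mono_mul_mem (X 0) (X 1) ?_ ?_ (hpath1 hW)
      · exact Nat.le.intro (show ((m + 1) * w + E) * p 1
            + ((m + 1) * w + E + e2 + 1) * ((m + 1) * p 1) + r
          = p 1 * ((m + 1) * ((m + 1) * w + E + e2 + 1 + w) + E) + r by ring)
      · have eq2 : (p 1 * ((m + 1) * ((m + 1) * w + E + e2 + 1 + w) + E) + r)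
            + ((e2 + 1) * p 1 + 0 * ((m + 1) * p 1))
            + ((ρ + 1) + ∑ l ∈ Finset.Icc 2 (u - 1), p l)
            = ((m + 1) * w + E + e2) * ((m + 2) * p 1)
              + ((m + 3) * p 1 + ∑ l ∈ Finset.Icc 2 (u - 1), p l) := by
          have hρz : (p 1 : ℤ) = r + ρ + 1 := by exact_mod_cast hρ
          zify
          linear_combination -hρz
        have h4 : (p 1 * ((m + 1) * ((m + 1) * w + E + e2 + 1 + w) + E) + r)
            + ((e2 + 1) * p 1 + 0 * ((m + 1) * p 1))
            ≤ (p 1 * ((m + 1) * ((m + 1) * w + E + e2 + 1 + w) + E) + r) + β := by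
          rw [hab]; exact Nat.le.intro eq2
        exact Nat.le_of_add_le_add_left h4
    · -- CASE TOP : use I 1 ^ (kp+1)
      obtain ⟨d0, hd0⟩ := Nat.exists_eq_add_of_le (show kp + 1 ≤ (m + 1) * w + E from hcK)
      have hW : (X 0 : MvPolynomial (Fin 2) K)
            ^ ((kp + 1) * p 1 + (kp + 1) * ((m + 1) * p 1))
          * X 1 ^ (0 * p 1 + 0 * ((m + 1) * p 1)) ∈ I 1 ^ (kp + 1) := by
        rw [hI1]
        exact mem_sq_pow _ _ (p 1) ((m + 1) * p 1) (kp + 1) (kp + 1) 0 (kp + 1) 0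
          (by omega) (by omega)
      refine mono_mul_mem (X 0) (X 1) ?_ ?_ (hpath1 hW)
      · have eq1 : (kp + 1) * p 1 + (kp + 1) * ((m + 1) * p 1) + (p 1 * d0 + r)
            = p 1 * ((m + 1) * (kp + 1 + w) + E) + r := by
          have hd0z : ((m : ℤ) + 1) * w + E = (kp : ℤ) + 1 + d0 := by exact_mod_cast hd0
          zify
          linear_combination (-(p 1 : ℤ)) * hd0z
        exact Nat.le.intro eq1
      · simp
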